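/- Let E be a real Hilbert space and let L be an orthomodular lattice admitting a strong set of E-valued states. Then for every n ≥ 2, all a, b : Fin n → L with a(i) ⊥ a(j) for all i ≠ j and a(i) ⊥ b(i) for all i, and every r ∈ L with r ⊥ ⨆_i a(i), equation E′ₙ holds: q ∩ (q → r′) ∩ ((⨆_i a(i)) ∪ r) ≤ ⨆_i b(i), where q = ⨅_i (a(i) ∪ b(i)) and x → y denotes x′ ∪ (x ∩ y). -/

import Mathlib

/-- An ortholattice: a bounded lattice with an orthocomplementation. -/
class Ortholattice (α : Type*) extends Lattice α, BoundedOrder α where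
  ocompl : α → α
  sup_ocompl : ∀ a : α, a ⊔ ocompl a = ⊤
  inf_ocompl : ∀ a : α, a ⊓ ocompl a = ⊥
  ocompl_anti : ∀ a b : α, a ≤ b → ocompl b ≤ ocompl a
  ocompl_ocompl : ∀ a : α, ocompl (ocompl a) = a

postfix:max "ᗮ" => Ortholattice.ocompl

/-- An orthomodular lattice. -/
class OrthomodularLattice (α : Type*) extends Ortholattice α where
  orthomodular : ∀ a b : α, a ≤ b → b = a ⊔ (aᗮ ⊓ b)

/-- The Sasaki hook `x → y = x′ ∪ (x ∩ y)`. -/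
def oimp {α : Type*} [Ortholattice α] (x y : α) : α := xᗮ ⊔ (x ⊓ y)

/-- An `E`-valued state on an ortholattice, for a real Hilbert space `E`. -/
structure HState (E : Type*) [NormedAddCommGroup E] [InnerProductSpace ℝ E]
    (α : Type*) [Ortholattice α] where
  val : α → E
  norm_top : ‖val ⊤‖ = 1
  additive : ∀ a b : α, a ≤ bᗮ → val (a ⊔ b) = val a + val b
  orthogonal : ∀ a b : α, a ≤ bᗮ → (inner ℝ (val a) (val b) : ℝ) = 0

/-- A strong set of `E`-valued states. -/
def IsStrongHSet {E : Type*} [NormedAddCommGroup E] [InnerProductSpace ℝ E]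
    {α : Type*} [Ortholattice α] (S : Set (HState E α)) : Prop :=
  ∀ a b : α, (∀ s ∈ S, ‖s.val a‖ = 1 → ‖s.val b‖ = 1) → a ≤ b

section Aux

lemma le_ocompl_symm {α : Type*} [Ortholattice α] {a b : α} (h : a ≤ bᗮ) : b ≤ aᗮ := by
  have := Ortholattice.ocompl_anti _ _ h
  rwa [Ortholattice.ocompl_ocompl] at this

namespace HState

variable {E : Type*} [NormedAddCommGroup E] [InnerProductSpace ℝ E]
  {α : Type*} [OrthomodularLattice α] (s : HState E α)

lemma val_bot : s.val (⊥ : α) = 0 := by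
  have h := s.additive ⊥ ⊥ bot_le
  rw [sup_idem] at h
  exact (left_eq_add.mp h)

lemma decomp_eq {x y : α} (h : x ≤ y) : s.val y = s.val x + s.val (xᗮ ⊓ y) := by
  have hle : x ≤ (xᗮ ⊓ y)ᗮ :=
    le_ocompl_symm (inf_le_left : xᗮ ⊓ y ≤ xᗮ)
  have hom := OrthomodularLattice.orthomodular x y h
  conv_lhs => rw [hom]
  exact s.additive _ _ hle

lemma decomp_inner {x y : α} : (inner ℝ (s.val x) (s.val (xᗮ ⊓ y)) : ℝ) = 0 := by
  have hle : x ≤ (xᗮ ⊓ y)ᗮ :=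
    le_ocompl_symm (inf_le_left : xᗮ ⊓ y ≤ xᗮ)
  exact s.orthogonal _ _ hle

lemma norm_sq_decomp {x y : α} (h : x ≤ y) :
    ‖s.val y‖ ^ 2 = ‖s.val x‖ ^ 2 + ‖s.val (xᗮ ⊓ y)‖ ^ 2 := by
  rw [s.decomp_eq h, norm_add_sq_real, s.decomp_inner]
  ring

lemma norm_mono {x y : α} (h : x ≤ y) : ‖s.val x‖ ≤ ‖s.val y‖ := by
  have := s.norm_sq_decomp h
  nlinarith [norm_nonneg (s.val x), norm_nonneg (s.val y), sq_nonneg ‖s.val (xᗮ ⊓ y)‖]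

lemma norm_le_one (x : α) : ‖s.val x‖ ≤ 1 := by
  have := s.norm_mono (le_top (a := x))
  rwa [s.norm_top] at this

lemma norm_one_of_le {x y : α} (h : x ≤ y) (hx : ‖s.val x‖ = 1) : ‖s.val y‖ = 1 :=
  le_antisymm (s.norm_le_one y) (hx ▸ s.norm_mono h)

lemma val_ocompl_eq_zero {x : α} (hx : ‖s.val x‖ = 1) : s.val xᗮ = 0 := by
  have hd := s.norm_sq_decomp (le_top (a := x))
  rw [inf_top_eq, s.norm_top, hx] at hd
  have : ‖s.val xᗮ‖ = 0 := by nlinarith [norm_nonneg (s.val xᗮ)]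
  exact norm_eq_zero.mp this

lemma val_eq_top {x : α} (hx : ‖s.val x‖ = 1) : s.val x = s.val ⊤ := by
  have hd := s.decomp_eq (le_top (a := x))
  rw [inf_top_eq, s.val_ocompl_eq_zero hx, add_zero] at hd
  exact hd.symm

lemma val_zero_of_le {x y : α} (h : x ≤ y) (hy : s.val y = 0) : s.val x = 0 := by
  have := s.norm_mono h
  rw [hy, norm_zero] at this
  exact norm_eq_zero.mp (le_antisymm this (norm_nonneg _))

lemma val_sup_eq_sum {n : ℕ} (a : Fin n → α)
    (haa : ∀ i j : Fin n, i ≠ j → a i ≤ (a j)ᗮ) (t : Finset (Fin n)) :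
    s.val (t.sup a) = ∑ i ∈ t, s.val (a i) := by
  induction t using Finset.induction_on with
  | empty => simpa using s.val_bot
  | @insert i t' hi ih =>
    have hle : t'.sup a ≤ (a i)ᗮ := Finset.sup_le fun j hj => haa j i (by rintro rfl; exact hi hj)
    rw [Finset.sup_insert, s.additive _ _ (le_ocompl_symm hle), ih, Finset.sum_insert hi]

end HState

end Aux

theorem EprimeN_of_strong_hilbert_states {E : Type*} [NormedAddCommGroup E]
    [InnerProductSpace ℝ E] [CompleteSpace E]
    {α : Type*} [OrthomodularLattice α]
    (S : Set (HState E α)) (hS : IsStrongHSet S)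
    (n : ℕ) (hn : 2 ≤ n) (a b : Fin n → α) (r : α)
    (haa : ∀ i j : Fin n, i ≠ j → a i ≤ (a j)ᗮ)
    (hab : ∀ i : Fin n, a i ≤ (b i)ᗮ)
    (hr : r ≤ (Finset.univ.sup a)ᗮ) :
    Finset.univ.inf (fun i => a i ⊔ b i) ⊓
        oimp (Finset.univ.inf (fun i => a i ⊔ b i)) rᗮ ⊓
        (Finset.univ.sup a ⊔ r) ≤
      Finset.univ.sup b := by
  set p := Finset.univ.sup a with hp
  set q := Finset.univ.inf (fun i => a i ⊔ b i) with hq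
  set c := Finset.univ.sup b with hc
  apply hS
  intro s _ hx
  -- norms of the three conjuncts are 1
  have hq1 : ‖s.val q‖ = 1 := s.norm_one_of_le (inf_le_left.trans inf_le_left) hx
  have hoimp1 : ‖s.val (oimp q rᗮ)‖ = 1 := s.norm_one_of_le (inf_le_left.trans inf_le_right) hx
  have hpr1 : ‖s.val (p ⊔ r)‖ = 1 := s.norm_one_of_le inf_le_right hx
  -- s.val r = 0
  have hqc0 : s.val qᗮ = 0 := s.val_ocompl_eq_zero hq1
  have hqr : s.val (oimp q rᗮ) = s.val qᗮ + s.val (q ⊓ rᗮ) :=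
    s.additive _ _ (le_ocompl_symm ((inf_le_left : q ⊓ rᗮ ≤ q).trans (Ortholattice.ocompl_ocompl q).ge))
  have hqr1 : ‖s.val (q ⊓ rᗮ)‖ = 1 := by
    rw [hqr, hqc0, zero_add] at hoimp1; exact hoimp1
  have hr0 : s.val r = 0 := by
    refine s.val_zero_of_le ?_ (s.val_ocompl_eq_zero hqr1)
    have : q ⊓ rᗮ ≤ rᗮ := inf_le_right
    have := Ortholattice.ocompl_anti _ _ this
    rwa [Ortholattice.ocompl_ocompl] at this
  -- s.val p = s.val ⊤
  have hprle : p ≤ rᗮ := le_ocompl_symm hr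
  have hpr : s.val (p ⊔ r) = s.val p := by
    rw [s.additive p r hprle, hr0, add_zero]
  have hp1 : ‖s.val p‖ = 1 := by rw [← hpr]; exact hpr1
  have hpt : s.val p = s.val ⊤ := s.val_eq_top hp1
  -- each a i ⊔ b i has state value s.val ⊤
  have habt : ∀ i : Fin n, s.val (a i) + s.val (b i) = s.val ⊤ := by
    intro i
    have hqle : q ≤ a i ⊔ b i := by
      rw [hq]; exact Finset.inf_le (Finset.mem_univ i)
    have h1 : ‖s.val (a i ⊔ b i)‖ = 1 := s.norm_one_of_le hqle hq1
    rw [← s.val_eq_top h1, s.additive _ _ (hab i)]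
  -- inner products with s.val cᗮ
  have hcbi : ∀ i : Fin n, (inner ℝ (s.val cᗮ) (s.val (b i)) : ℝ) = 0 := by
    intro i
    refine s.orthogonal _ _ ?_
    exact le_ocompl_symm (le_ocompl_symm (Ortholattice.ocompl_anti _ _
      (Finset.le_sup (Finset.mem_univ i))))
  have hcct : s.val ⊤ = s.val c + s.val cᗮ := by
    have h := s.additive c cᗮ (Ortholattice.ocompl_ocompl c).ge
    rwa [Ortholattice.sup_ocompl] at h
  have hcc0 : (inner ℝ (s.val c) (s.val cᗮ) : ℝ) = 0 :=
    s.orthogonal c cᗮ (Ortholattice.ocompl_ocompl c).ge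
  have hctn : (inner ℝ (s.val cᗮ) (s.val ⊤) : ℝ) = ‖s.val cᗮ‖ ^ 2 := by
    rw [hcct, inner_add_right, real_inner_comm, hcc0, zero_add, real_inner_self_eq_norm_sq]
  have hcti : ∀ i : Fin n, (inner ℝ (s.val cᗮ) (s.val (a i)) : ℝ) = ‖s.val cᗮ‖ ^ 2 := by
    intro i
    have := habt i
    calc (inner ℝ (s.val cᗮ) (s.val (a i)) : ℝ)
        = inner ℝ (s.val cᗮ) (s.val (a i) + s.val (b i)) := by
          rw [inner_add_right, hcbi i, add_zero]
      _ = inner ℝ (s.val cᗮ) (s.val ⊤) := by rw [this]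
      _ = ‖s.val cᗮ‖ ^ 2 := hctn
  -- sum over the orthogonal family
  have hsum : s.val p = ∑ i : Fin n, s.val (a i) := s.val_sup_eq_sum a haa Finset.univ
  have hkey : ‖s.val cᗮ‖ ^ 2 = (n : ℝ) * ‖s.val cᗮ‖ ^ 2 := by
    calc ‖s.val cᗮ‖ ^ 2 = (inner ℝ (s.val cᗮ) (s.val ⊤) : ℝ) := hctn.symm
      _ = inner ℝ (s.val cᗮ) (s.val p) := by rw [hpt]
      _ = ∑ i : Fin n, (inner ℝ (s.val cᗮ) (s.val (a i)) : ℝ) := by rw [hsum, inner_sum]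
      _ = ∑ _i : Fin n, ‖s.val cᗮ‖ ^ 2 := by
          exact Finset.sum_congr rfl fun i _ => hcti i
      _ = (n : ℝ) * ‖s.val cᗮ‖ ^ 2 := by
          rw [Finset.sum_const, Finset.card_univ, Fintype.card_fin, nsmul_eq_mul]
  have hn2 : (2 : ℝ) ≤ (n : ℝ) := by exact_mod_cast hn
  have hc0 : s.val cᗮ = 0 := by
    have : ‖s.val cᗮ‖ ^ 2 = 0 := by nlinarith [sq_nonneg ‖s.val cᗮ‖]
    have := pow_eq_zero_iff (n := 2) (by norm_num) |>.mp this
    exact norm_eq_zero.mp this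
  have : s.val ⊤ = s.val c := by rw [hcct, hc0, add_zero]
  rw [← this]
  exact s.norm_top
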